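/- Let S be a group written additively (operation ⊕, inverse −, identity 0, not necessarily commutative) with a map ω : S → ℝ ∪ {∞} satisfying (1) ω(x) = ∞ iff x = 0 and (3) ω(−x) = ω(x) and ω(x ⊕ y) ≥ min(ω(x), ω(y)), and let d(x,y) := 2^{−ω(x ⊕ (−y))} be the induced ultrametric on S. Let T′ be a subgroup of S with T′ ≠ S. If the metric subspace (T′, d|_{T′×T′}) satisfies (MC′), then there exists an independent element in S, i.e., an element x ≠ 0 with ω(x ⊕ y) = min(ω(x), ω(y)) for all y ∈ T′. -/

import Mathlib

/-- The ultrametric induced on `S` by the valuation-like map `ω`,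
with the convention `2 ^ (-∞) = 0`. -/
noncomputable def dOf {S : Type*} [AddGroup S] (ω : S → WithTop ℝ) (x y : S) : ℝ :=
  WithTop.recTopCoe 0 (fun r : ℝ => (2 : ℝ) ^ (-r)) (ω (x + -y))

/-- Property (MC′) for the metric subspace on `A ⊆ X` induced by a distance function `d`:
every nested sequence of c-balls (closed balls of positive radius, with centers in `A`
and taken inside `A`) has nonempty intersection. -/
def MCprimeOn {X : Type*} (d : X → X → ℝ) (A : Set X) : Prop :=
  ∀ (c : ℕ → X) (r : ℕ → ℝ),
    (∀ n, c n ∈ A) → (∀ n, 0 < r n) →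
    (∀ n, {y ∈ A | d (c (n + 1)) y ≤ r (n + 1)} ⊆ {y ∈ A | d (c n) y ≤ r n}) →
    (⋂ n, {y ∈ A | d (c n) y ≤ r n}).Nonempty

noncomputable def fTop : WithTop ℝ → ℝ :=
  WithTop.recTopCoe 0 fun r : ℝ => (2 : ℝ) ^ (-r)

lemma fTop_nonneg (a : WithTop ℝ) : 0 ≤ fTop a := by
  induction a using WithTop.recTopCoe with
  | top => simp [fTop]
  | coe r => simpa [fTop] using (Real.rpow_pos_of_pos two_pos (-r)).le

lemma fTop_strictAnti : StrictAnti fTop := by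
  intro a b hab
  induction b using WithTop.recTopCoe with
  | top =>
    induction a using WithTop.recTopCoe with
    | top => exact absurd hab (lt_irrefl _)
    | coe s => simpa [fTop] using Real.rpow_pos_of_pos two_pos (-s)
  | coe r =>
    induction a using WithTop.recTopCoe with
    | top => exact absurd hab not_top_lt
    | coe s =>
      have hsr : s < r := WithTop.coe_lt_coe.mp hab
      simpa [fTop] using
        (Real.rpow_lt_rpow_left_iff (by norm_num : (1:ℝ) < 2)).mpr
          (by linarith : -r < -s)

/-- If `T′` is a proper subgroup of `S` and the metric subspace
`(T′, d|_{T′×T′})` satisfies (MC′), then there exists an independent element in `S`. -/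
theorem exists_independent {S : Type*} [AddGroup S] (ω : S → WithTop ℝ)
    (hω1 : ∀ x : S, ω x = ⊤ ↔ x = 0)
    (hω3neg : ∀ x : S, ω (-x) = ω x)
    (hω3 : ∀ x y : S, min (ω x) (ω y) ≤ ω (x + y))
    (T' : AddSubgroup S) (hT' : T' ≠ ⊤)
    (hMC : MCprimeOn (dOf ω) (T' : Set S)) :
    ∃ x : S, x ≠ 0 ∧ ∀ y ∈ T', ω (x + y) = min (ω x) (ω y) := by
  classical
  have hd_def : ∀ a b : S, dOf ω a b = fTop (ω (a + -b)) := fun a b => rfl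
  have hsymm : ∀ a b : S, dOf ω a b = dOf ω b a := by
    intro a b
    rw [hd_def, hd_def]
    congr 1
    rw [← hω3neg (a + -b), neg_add_rev, neg_neg]
  have hultra : ∀ a b c : S, dOf ω a c ≤ max (dOf ω a b) (dOf ω b c) := by
    intro a b c
    have h1 : min (ω (a + -b)) (ω (b + -c)) ≤ ω (a + -c) := by
      have := hω3 (a + -b) (b + -c)
      rwa [add_assoc, neg_add_cancel_left] at this
    rw [hd_def, hd_def, hd_def]
    refine le_trans (fTop_strictAnti.antitone h1) ?_
    rcases le_total (ω (a + -b)) (ω (b + -c)) with h | h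
    · rw [min_eq_left h]; exact le_max_left _ _
    · rw [min_eq_right h]; exact le_max_right _ _
  obtain ⟨x, hx⟩ : ∃ x, x ∉ T' := by
    by_contra h
    push_neg at h
    exact hT' ((AddSubgroup.eq_top_iff' T').mpr h)
  set D : Set ℝ := dOf ω x '' (T' : Set S) with hD
  have hDne : D.Nonempty := ⟨_, 0, T'.zero_mem, rfl⟩
  have hDbdd : BddBelow D := ⟨0, by rintro a ⟨u, _, rfl⟩; exact fTop_nonneg _⟩
  set δ : ℝ := sInf D with hδ
  have hδ0 : 0 ≤ δ := le_csInf hDne (by rintro a ⟨u, _, rfl⟩; exact fTop_nonneg _)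
  have hδle : ∀ u ∈ T', δ ≤ dOf ω x u := fun u hu => csInf_le hDbdd ⟨u, hu, rfl⟩
  -- approximating sequence
  have hstep : ∀ n : ℕ, ∃ u, u ∈ (T' : Set S) ∧ dOf ω x u < δ + 1 / (n + 1) := by
    intro n
    have hpos : (0:ℝ) < 1 / (n + 1) := by positivity
    obtain ⟨a, ⟨u, huT, rfl⟩, hlt⟩ :=
      exists_lt_of_csInf_lt hDne (by linarith : sInf D < δ + 1 / (n + 1))
    exact ⟨u, huT, hlt⟩
  choose t htT htlt using hstep
  set r : ℕ → ℝ := fun n => δ + 1 / (n + 1) with hr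
  have hrpos : ∀ n, 0 < r n := by
    intro n
    have : (0:ℝ) < 1 / (n + 1) := by positivity
    simp only [hr]; linarith
  have hrmono : ∀ n, r (n + 1) ≤ r n := by
    intro n
    have h1 : (1:ℝ) / (n + 1 + 1) ≤ 1 / (n + 1) := by
      apply one_div_le_one_div_of_le
      · positivity
      · push_cast; linarith
    simp only [hr]; push_cast; push_cast at h1; linarith
  have hnested : ∀ n, {y ∈ (T' : Set S) | dOf ω (t (n+1)) y ≤ r (n+1)} ⊆
      {y ∈ (T' : Set S) | dOf ω (t n) y ≤ r n} := by
    rintro n y ⟨hyT, hy⟩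
    refine ⟨hyT, ?_⟩
    have h1 := hultra (t n) x y
    have h2 := hultra x (t (n + 1)) y
    have h3 : dOf ω (t n) x ≤ r n := by rw [← hsymm]; exact (htlt n).le
    have h4 : dOf ω x (t (n + 1)) ≤ r (n + 1) := (htlt (n + 1)).le
    have h5 : dOf ω x y ≤ r (n + 1) := h2.trans (max_le h4 hy)
    have := hrmono n
    calc dOf ω (t n) y ≤ max (dOf ω (t n) x) (dOf ω x y) := h1
      _ ≤ r n := max_le h3 (h5.trans this)
  obtain ⟨y, hy⟩ := hMC t r htT hrpos hnested
  rw [Set.mem_iInter] at hy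
  have hyT : y ∈ T' := (hy 0).1
  have hyd : ∀ n, dOf ω (t n) y ≤ r n := fun n => (hy n).2
  have hxyr : ∀ n, dOf ω x y ≤ r n := by
    intro n
    exact (hultra x (t n) y).trans (max_le (htlt n).le (hyd n))
  have hxyδ : dOf ω x y ≤ δ := by
    refine le_of_forall_pos_le_add ?_
    intro ε hε
    obtain ⟨n, hn⟩ := exists_nat_one_div_lt hε
    have := hxyr n
    simp only [hr] at this
    push_cast at this hn ⊢
    linarith
  have hmin : ∀ u ∈ T', dOf ω x y ≤ dOf ω x u := fun u hu => hxyδ.trans (hδle u hu)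
  -- the independent element
  set z : S := x + -y with hz
  have hz0 : z ≠ 0 := by
    intro h
    exact hx (show x ∈ T' by rw [add_neg_eq_zero.mp h]; exact hyT)
  have key : ∀ w ∈ T', ω (z + w) ≤ ω z := by
    intro w hw
    have hmem : -w + y ∈ T' := T'.add_mem (T'.neg_mem hw) hyT
    have h1 : dOf ω x y ≤ dOf ω x (-w + y) := hmin _ hmem
    have he : x + -(-w + y) = z + w := by
      rw [neg_add_rev, neg_neg, hz, add_assoc]
    rw [hd_def, hd_def, he] at h1
    exact fTop_strictAnti.le_iff_ge.mp h1
  refine ⟨z, hz0, fun w hw => ?_⟩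
  have h1 : min (ω z) (ω w) ≤ ω (z + w) := hω3 z w
  have h2 : ω (z + w) ≤ ω z := key w hw
  have h3 : min (ω z) (ω (z + w)) ≤ ω w := by
    have := hω3 (-z) (z + w)
    rwa [neg_add_cancel_left, hω3neg] at this
  rcases le_total (ω z) (ω w) with h | h
  · rw [min_eq_left h]
    exact le_antisymm h2 ((min_eq_left h) ▸ h1)
  · rw [min_eq_right h]
    rw [min_eq_right h2] at h3
    exact le_antisymm h3 ((min_eq_right h) ▸ h1)
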